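/- arXiv:1410.3140 — 2 statements merged into one kernel-verified Lean document; each statement's English description precedes it below -/
import Mathlib

section
/- The functor F from (A ⊗ S^op)-modules to (B ⊗ B^op)-modules sending X to the bimodule [[0,0],[X,0]] is naturally isomorphic to Bε ⊗_A (−) ⊗_S (1−ε)B; it is exact, fully faithful, and sends projective objects to projective objects. -/
set_option linter.unusedSectionVars false
set_option maxHeartbeats 1000000
set_option synthInstance.maxHeartbeats 400000

open MulOpposite
open scoped TensorProduct

universe u

noncomputable section

open scoped TensorProduct
open MulOpposite

namespace NC

noncomputable section

universe w v

variable (k : Type w) [CommRing k] (B : Type u) [Ring B]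
variable (M N : Type v) [AddCommGroup M] [AddCommGroup N] [Module k M] [Module k N]
variable [Module Bᵐᵒᵖ M] [Module B N]

/-- The defining relations of the balanced tensor product `M ⊗_B N`. -/
def rel : Submodule k (TensorProduct k M N) :=
  Submodule.span k
    {z | ∃ (b : B) (m : M) (n : N), z = (op b • m) ⊗ₜ[k] n - m ⊗ₜ[k] (b • n)}

/-- The balanced tensor product `M ⊗_B N` of a right `B`-module `M` and a left
`B`-module `N` over the noncommutative ring `B`, as a quotient of `M ⊗[k] N`. -/
def Tensor := TensorProduct k M N ⧸ rel k B M N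

instance : AddCommGroup (Tensor k B M N) :=
  inferInstanceAs (AddCommGroup (TensorProduct k M N ⧸ rel k B M N))

instance : Module k (Tensor k B M N) :=
  inferInstanceAs (Module k (TensorProduct k M N ⧸ rel k B M N))

variable {M N}

/-- The canonical image of `m ⊗ n` in `M ⊗_B N`. -/
def mk (m : M) (n : N) : Tensor k B M N :=
  Submodule.Quotient.mk (m ⊗ₜ[k] n)

lemma mk_balanced (b : B) (m : M) (n : N) : mk k B (op b • m) n = mk k B m (b • n) := by
  exact (Submodule.Quotient.eq _).mpr (Submodule.subset_span ⟨b, m, n, rfl⟩)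

lemma mk_add_left (m m' : M) (n : N) : mk k B (m + m') n = mk k B m n + mk k B m' n := by
  simp [mk, TensorProduct.add_tmul, Submodule.Quotient.mk_add]; rfl

lemma mk_add_right (m : M) (n n' : N) : mk k B m (n + n') = mk k B m n + mk k B m n' := by
  simp [mk, TensorProduct.tmul_add, Submodule.Quotient.mk_add]; rfl

lemma smul_mk_k (c : k) (m : M) (n : N) : c • mk k B m n = mk k B (c • m) n := by
  exact (congrArg (Submodule.Quotient.mk (p := rel k B M N))
    (TensorProduct.smul_tmul' c m n)).symm

lemma smul_mk_k' (c : k) (m : M) (n : N) : c • mk k B m n = mk k B m (c • n) := by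
  exact (congrArg (Submodule.Quotient.mk (p := rel k B M N))
    (TensorProduct.tmul_smul c m n)).symm

lemma mk_zero_left (n : N) : mk k B (0 : M) n = 0 := by
  simp [mk, TensorProduct.zero_tmul]; rfl

lemma mk_zero_right (m : M) : mk k B m (0 : N) = 0 := by
  simp [mk, TensorProduct.tmul_zero]; rfl

lemma induction_on {p : Tensor k B M N → Prop} (t : Tensor k B M N)
    (zero : p 0) (basic : ∀ m n, p (mk k B m n))
    (add : ∀ x y, p x → p y → p (x + y)) : p t := by
  obtain ⟨x, rfl⟩ := Submodule.Quotient.mk_surjective _ t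
  induction x using TensorProduct.induction_on with
  | zero => exact zero
  | tmul m n => exact basic m n
  | add x y hx hy => rw [Submodule.Quotient.mk_add]; exact add _ _ hx hy

section Lift

variable {P : Type v} [AddCommGroup P] [Module k P]

/-- Lift a balanced `k`-bilinear map to the balanced tensor product. -/
def lift (f : M →ₗ[k] N →ₗ[k] P)
    (hf : ∀ (b : B) (m : M) (n : N), f (op b • m) n = f m (b • n)) :
    Tensor k B M N →ₗ[k] P :=
  Submodule.liftQ _ (TensorProduct.lift f) (by
    rw [rel, Submodule.span_le]
    rintro z ⟨b, m, n, rfl⟩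
    simp [LinearMap.mem_ker, hf b m n])

@[simp] lemma lift_mk (f : M →ₗ[k] N →ₗ[k] P) (hf) (m : M) (n : N) :
    lift k B f hf (mk k B m n) = f m n := rfl

end Lift

section LeftAction

variable (A : Type u) [Ring A] [Module A M]
variable [SMulCommClass A Bᵐᵒᵖ M] [SMulCommClass A k M]

/-- The `k`-linear endomorphism of `M` given by the action of `a : A`. -/
def actL (a : A) : M →ₗ[k] M where
  toFun m := a • m
  map_add' := smul_add a
  map_smul' c m := (smul_comm a c m)

variable (N)

lemma relLe (a : A) :
    rel k B M N ≤ Submodule.comap (LinearMap.rTensor N (actL k A a)) (rel k B M N) := by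
  rw [rel, Submodule.span_le]
  rintro z ⟨b, m, n, rfl⟩
  simp only [SetLike.mem_coe, Submodule.mem_comap, map_sub, LinearMap.rTensor_tmul]
  refine Submodule.subset_span ⟨b, a • m, n, ?_⟩
  have h1 : actL k A a (op b • m) = op b • (a • m) := smul_comm a (op b) m
  have h2 : actL k A a m = a • m := rfl
  rw [h1, h2]

/-- The action of `a : A` on `M ⊗_B N`. -/
def actLQ (a : A) : Tensor k B M N →ₗ[k] Tensor k B M N :=
  Submodule.mapQ _ _ (LinearMap.rTensor N (actL k A a)) (relLe k B N A a)

lemma actLQ_mk (a : A) (m : M) (n : N) :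
    actLQ k B N A a (mk k B m n) = mk k B (a • m) n := rfl

/-- The ring homomorphism `A → End_k (M ⊗_B N)` defining the left `A`-module structure. -/
def actLRingHom : A →+* Module.End k (Tensor k B M N) where
  toFun := actLQ k B N A
  map_one' := by
    refine Submodule.linearMap_qext _ (TensorProduct.ext' fun m n => ?_)
    show actLQ k B N A 1 (mk k B m n) = mk k B m n
    rw [actLQ_mk, one_smul]
  map_mul' x y := by
    refine Submodule.linearMap_qext _ (TensorProduct.ext' fun m n => ?_)
    show actLQ k B N A (x * y) (mk k B m n) = actLQ k B N A x (actLQ k B N A y (mk k B m n))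
    rw [actLQ_mk, actLQ_mk, actLQ_mk, mul_smul]
  map_zero' := by
    refine Submodule.linearMap_qext _ (TensorProduct.ext' fun m n => ?_)
    show actLQ k B N A 0 (mk k B m n) = 0
    rw [actLQ_mk, zero_smul, mk_zero_left]
  map_add' x y := by
    refine Submodule.linearMap_qext _ (TensorProduct.ext' fun m n => ?_)
    show actLQ k B N A (x + y) (mk k B m n)
        = actLQ k B N A x (mk k B m n) + actLQ k B N A y (mk k B m n)
    rw [actLQ_mk, actLQ_mk, actLQ_mk, add_smul, mk_add_left]

variable (M)

/-- The left `A`-module structure on `M ⊗_B N` induced by the left `A`-action on `M`. -/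
def leftModule : Module A (Tensor k B M N) :=
  Module.compHom (Tensor k B M N) (actLRingHom k B N A (M := M))

attribute [local instance] leftModule

lemma smul_mk_left (a : A) (m : M) (n : N) :
    a • mk k B m n = mk k B (a • m) n := rfl

instance : SMulCommClass A k (Tensor k B M N) where
  smul_comm a c t := by
    induction t using induction_on with
    | zero => simp
    | basic m n => rw [smul_mk_k, smul_mk_left, smul_mk_left, smul_mk_k, smul_comm]
    | add x y hx hy => simp [smul_add, hx, hy]

instance : SMulCommClass k A (Tensor k B M N) := SMulCommClass.symm _ _ _

end LeftAction

section RightAction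

variable (C : Type u) [Ring C] [Module Cᵐᵒᵖ N]
variable [SMulCommClass Cᵐᵒᵖ B N] [SMulCommClass Cᵐᵒᵖ k N]

/-- The `k`-linear endomorphism of `N` given by the right action of `c : C`. -/
def actR (c : Cᵐᵒᵖ) : N →ₗ[k] N where
  toFun n := c • n
  map_add' := smul_add c
  map_smul' d n := (smul_comm c d n)

variable (M)

lemma relLeR (c : Cᵐᵒᵖ) :
    rel k B M N ≤ Submodule.comap (LinearMap.lTensor M (actR k C c)) (rel k B M N) := by
  rw [rel, Submodule.span_le]
  rintro z ⟨b, m, n, rfl⟩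
  simp only [SetLike.mem_coe, Submodule.mem_comap, map_sub, LinearMap.lTensor_tmul]
  refine Submodule.subset_span ⟨b, m, c • n, ?_⟩
  have h1 : actR k C c (b • n) = b • (c • n) := smul_comm c b n
  have h2 : actR k C c n = c • n := rfl
  rw [h1, h2]

/-- The right action of `c : C` on `M ⊗_B N`. -/
def actRQ (c : Cᵐᵒᵖ) : Tensor k B M N →ₗ[k] Tensor k B M N :=
  Submodule.mapQ _ _ (LinearMap.lTensor M (actR k C c)) (relLeR k B M C c)

lemma actRQ_mk (c : Cᵐᵒᵖ) (m : M) (n : N) :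
    actRQ k B M C c (mk k B m n) = mk k B m (c • n) := rfl

/-- The ring homomorphism `Cᵐᵒᵖ → End_k (M ⊗_B N)` defining the right `C`-module structure. -/
def actRRingHom : Cᵐᵒᵖ →+* Module.End k (Tensor k B M N) where
  toFun := actRQ k B M C
  map_one' := by
    refine Submodule.linearMap_qext _ (TensorProduct.ext' fun m n => ?_)
    show actRQ k B M C 1 (mk k B m n) = mk k B m n
    rw [actRQ_mk, one_smul]
  map_mul' x y := by
    refine Submodule.linearMap_qext _ (TensorProduct.ext' fun m n => ?_)
    show actRQ k B M C (x * y) (mk k B m n) = actRQ k B M C x (actRQ k B M C y (mk k B m n))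
    rw [actRQ_mk, actRQ_mk, actRQ_mk, mul_smul]
  map_zero' := by
    refine Submodule.linearMap_qext _ (TensorProduct.ext' fun m n => ?_)
    show actRQ k B M C 0 (mk k B m n) = 0
    rw [actRQ_mk, zero_smul, mk_zero_right]
  map_add' x y := by
    refine Submodule.linearMap_qext _ (TensorProduct.ext' fun m n => ?_)
    show actRQ k B M C (x + y) (mk k B m n)
        = actRQ k B M C x (mk k B m n) + actRQ k B M C y (mk k B m n)
    rw [actRQ_mk, actRQ_mk, actRQ_mk, add_smul, mk_add_right]

/-- The right `C`-module structure on `M ⊗_B N` induced by the right `C`-action on `N`. -/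
def rightModule : Module Cᵐᵒᵖ (Tensor k B M N) :=
  Module.compHom (Tensor k B M N) (actRRingHom k B M C (N := N))

attribute [local instance] rightModule

lemma smul_mk_right (c : Cᵐᵒᵖ) (m : M) (n : N) :
    c • mk k B m n = mk k B m (c • n) := rfl

instance : SMulCommClass Cᵐᵒᵖ k (Tensor k B M N) where
  smul_comm c d t := by
    induction t using induction_on with
    | zero => simp
    | basic m n =>
        rw [smul_mk_k, smul_mk_right, smul_mk_right, smul_mk_k]
    | add x y hx hy => simp [smul_add, hx, hy]

instance : SMulCommClass k Cᵐᵒᵖ (Tensor k B M N) := SMulCommClass.symm _ _ _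

end RightAction

section Bimodule

variable (A C : Type u) [Ring A] [Ring C] [Module A M] [Module Cᵐᵒᵖ N]
variable [SMulCommClass A Bᵐᵒᵖ M] [SMulCommClass A k M]
variable [SMulCommClass Cᵐᵒᵖ B N] [SMulCommClass Cᵐᵒᵖ k N]

attribute [local instance] leftModule rightModule

instance : SMulCommClass A Cᵐᵒᵖ (Tensor k B M N) where
  smul_comm a c t := by
    induction t using induction_on with
    | zero => simp
    | basic m n =>
        simp only [smul_mk_right k B M C, smul_mk_left k B M N A]
    | add x y hx hy => simp [smul_add, hx, hy]

section Tower

variable [Algebra k A] [Module k M] [IsScalarTower k A M]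

instance : IsScalarTower k A (Tensor k B M N) where
  smul_assoc c a t := by
    induction t using induction_on with
    | zero => simp
    | basic m n =>
        simp only [smul_mk_left k B M N A, smul_mk_k, smul_assoc]
    | add x y hx hy => simp [smul_add, hx, hy]

end Tower

section TowerR

variable [Algebra k C] [IsScalarTower k Cᵐᵒᵖ N]

instance : IsScalarTower k Cᵐᵒᵖ (Tensor k B M N) where
  smul_assoc c a t := by
    induction t using induction_on with
    | zero => simp
    | basic m n =>
        simp only [smul_mk_right k B M C, smul_mk_k', smul_assoc]
    | add x y hx hy => simp [smul_add, hx, hy]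

end TowerR

end Bimodule

end

end NC


open MulOpposite


/-- The lower triangular matrix algebra `[[S, 0], [M, A]]` associated to rings `S`, `A`
and an `(A, S)`-bimodule `M`. -/
@[ext] structure Tri (S M A : Type u) where
  s : S
  m : M
  a : A

namespace Tri

variable {S M A : Type u} [Ring S] [Ring A] [AddCommGroup M]
variable [Module A M] [Module Sᵐᵒᵖ M] [SMulCommClass A Sᵐᵒᵖ M]

instance : Zero (Tri S M A) := ⟨⟨0, 0, 0⟩⟩
instance : Add (Tri S M A) := ⟨fun x y => ⟨x.s + y.s, x.m + y.m, x.a + y.a⟩⟩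
instance : Neg (Tri S M A) := ⟨fun x => ⟨-x.s, -x.m, -x.a⟩⟩
instance : One (Tri S M A) := ⟨⟨1, 0, 1⟩⟩
instance : Mul (Tri S M A) :=
  ⟨fun x y => ⟨x.s * y.s, op y.s • x.m + x.a • y.m, x.a * y.a⟩⟩

@[simp] lemma zero_s : (0 : Tri S M A).s = 0 := rfl
@[simp] lemma zero_m : (0 : Tri S M A).m = 0 := rfl
@[simp] lemma zero_a : (0 : Tri S M A).a = 0 := rfl
@[simp] lemma add_s (x y : Tri S M A) : (x + y).s = x.s + y.s := rfl
@[simp] lemma add_m (x y : Tri S M A) : (x + y).m = x.m + y.m := rfl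
@[simp] lemma add_a (x y : Tri S M A) : (x + y).a = x.a + y.a := rfl
@[simp] lemma neg_s (x : Tri S M A) : (-x).s = -x.s := rfl
@[simp] lemma neg_m (x : Tri S M A) : (-x).m = -x.m := rfl
@[simp] lemma neg_a (x : Tri S M A) : (-x).a = -x.a := rfl
@[simp] lemma one_s : (1 : Tri S M A).s = 1 := rfl
@[simp] lemma one_m : (1 : Tri S M A).m = 0 := rfl
@[simp] lemma one_a : (1 : Tri S M A).a = 1 := rfl
@[simp] lemma mul_s (x y : Tri S M A) : (x * y).s = x.s * y.s := rfl
@[simp] lemma mul_m (x y : Tri S M A) : (x * y).m = op y.s • x.m + x.a • y.m := rfl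
@[simp] lemma mul_a (x y : Tri S M A) : (x * y).a = x.a * y.a := rfl

instance : AddCommGroup (Tri S M A) where
  add_assoc x y z := by ext <;> simp [add_assoc]
  zero_add x := by ext <;> simp
  add_zero x := by ext <;> simp
  neg_add_cancel x := by ext <;> simp
  add_comm x y := by ext <;> simp [add_comm]
  nsmul := nsmulRec
  zsmul := zsmulRec

instance : Ring (Tri S M A) where
  __ := (inferInstance : AddCommGroup (Tri S M A))
  mul_assoc x y z := by
    ext <;> simp [mul_assoc, mul_smul, smul_add, smul_comm, add_assoc]
  one_mul x := by ext <;> simp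
  mul_one x := by ext <;> simp
  left_distrib x y z := by ext <;> (simp [mul_add, smul_add, add_smul]; try abel)
  right_distrib x y z := by ext <;> (simp [add_mul, smul_add, add_smul]; try abel)
  zero_mul x := by ext <;> simp
  mul_zero x := by ext <;> simp

@[simp] lemma sub_s (x y : Tri S M A) : (x - y).s = x.s - y.s := by
  change (x + -y).s = _; rw [add_s, neg_s, sub_eq_add_neg]

@[simp] lemma sub_m (x y : Tri S M A) : (x - y).m = x.m - y.m := by
  change (x + -y).m = _; rw [add_m, neg_m, sub_eq_add_neg]

@[simp] lemma sub_a (x y : Tri S M A) : (x - y).a = x.a - y.a := by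
  change (x + -y).a = _; rw [add_a, neg_a, sub_eq_add_neg]

/-- The idempotent `ε = [[0,0],[0,1]]`. -/
def eps : Tri S M A := ⟨0, 0, 1⟩

@[simp] lemma eps_s : (eps : Tri S M A).s = 0 := rfl
@[simp] lemma eps_m : (eps : Tri S M A).m = 0 := rfl
@[simp] lemma eps_a : (eps : Tri S M A).a = 1 := rfl

lemma eps_idem : (eps : Tri S M A) * eps = eps := by ext <;> simp

/-- The (non-unital) embedding of `A` in the lower right corner. -/
def iota (a : A) : Tri S M A := ⟨0, 0, a⟩

@[simp] lemma iota_s (a : A) : (iota a : Tri S M A).s = 0 := rfl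
@[simp] lemma iota_m (a : A) : (iota a : Tri S M A).m = 0 := rfl
@[simp] lemma iota_a (a : A) : (iota a : Tri S M A).a = a := rfl

section Alg

variable (k : Type u) [CommRing k] [Algebra k S] [Algebra k A] [Module k M]
variable [IsScalarTower k A M] [IsScalarTower k Sᵐᵒᵖ M]

/-- The canonical ring homomorphism `k → Tri S M A`. -/
def algMap : k →+* Tri S M A where
  toFun c := ⟨algebraMap k S c, 0, algebraMap k A c⟩
  map_one' := by ext <;> simp
  map_mul' x y := by ext <;> simp
  map_zero' := by ext <;> simp
  map_add' x y := by ext <;> simp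

instance : Algebra k (Tri S M A) :=
  RingHom.toAlgebra' (algMap k) (by
    intro c x
    ext
    · simp [algMap, Algebra.commutes]
    · show op x.s • (0 : M) + algebraMap k A c • x.m = op (algebraMap k S c) • x.m + x.a • 0
      rw [smul_zero, smul_zero, zero_add, add_zero, ← MulOpposite.algebraMap_apply,
        algebraMap_smul, algebraMap_smul]
    · simp [algMap, Algebra.commutes])

end Alg

end Tri

section Corner

variable (S A M : Type u) [Ring S] [Ring A] [AddCommGroup M]
variable [Module A M] [Module Sᵐᵒᵖ M] [SMulCommClass A Sᵐᵒᵖ M]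

@[simp] lemma iota_mul (a b : A) :
    (Tri.iota (a * b) : Tri S M A) = Tri.iota a * Tri.iota b := by ext <;> simp

@[simp] lemma iota_add (a b : A) :
    (Tri.iota (a + b) : Tri S M A) = Tri.iota a + Tri.iota b := by ext <;> simp

@[simp] lemma iota_zero : (Tri.iota (0 : A) : Tri S M A) = 0 := by ext <;> simp

lemma iota_one : (Tri.iota (1 : A) : Tri S M A) = Tri.eps := by ext <;> simp

@[simp] lemma eps_mul_iota (a : A) :
    (Tri.eps : Tri S M A) * Tri.iota a = Tri.iota a := by ext <;> simp

@[simp] lemma iota_mul_eps (a : A) :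
    (Tri.iota a : Tri S M A) * Tri.eps = Tri.iota a := by ext <;> simp

/-- The right ideal `εB` of `B = Tri S M A`, as a right `B`-module. -/
def epsRight : Submodule (Tri S M A)ᵐᵒᵖ (Tri S M A) where
  carrier := {x | Tri.eps * x = x}
  add_mem' := fun {a} {b} ha hb => by
    simp only [Set.mem_setOf_eq] at *
    rw [mul_add, ha, hb]
  zero_mem' := by simp
  smul_mem' := fun c {x} hx => by
    simp only [Set.mem_setOf_eq] at *
    rw [MulOpposite.smul_eq_mul_unop, ← mul_assoc, hx]

/-- The right ideal `(1-ε)B` of `B = Tri S M A`, as a right `B`-module. -/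
def oneEpsRight : Submodule (Tri S M A)ᵐᵒᵖ (Tri S M A) where
  carrier := {x | (1 - Tri.eps) * x = x}
  add_mem' := fun {a} {b} ha hb => by
    simp only [Set.mem_setOf_eq] at *
    rw [mul_add, ha, hb]
  zero_mem' := by simp
  smul_mem' := fun c {x} hx => by
    simp only [Set.mem_setOf_eq] at *
    rw [MulOpposite.smul_eq_mul_unop, ← mul_assoc, hx]

/-- The left ideal `Bε` of `B = Tri S M A`, as a left `B`-module. -/
def epsLeft : Submodule (Tri S M A) (Tri S M A) where
  carrier := {x | x * Tri.eps = x}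
  add_mem' := fun {a} {b} ha hb => by
    simp only [Set.mem_setOf_eq] at *
    rw [add_mul, ha, hb]
  zero_mem' := by simp
  smul_mem' := fun c {x} hx => by
    simp only [Set.mem_setOf_eq, smul_eq_mul] at *
    rw [mul_assoc, hx]

/-- The left `A`-action on `εB` via `a • x = ι(a) x`. -/
instance : Module A (epsRight S A M) where
  smul a x := ⟨Tri.iota a * x.val, by
    have hx := x.2
    simp only [epsRight, Submodule.mem_mk, AddSubmonoid.mem_mk, AddSubsemigroup.mem_mk,
      Set.mem_setOf_eq] at *
    rw [← mul_assoc, eps_mul_iota]⟩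
  one_smul x := Subtype.ext (by
    show Tri.iota 1 * x.val = x.val
    rw [iota_one]; exact x.2)
  mul_smul a b x := Subtype.ext (by
    show Tri.iota (a * b) * x.val = Tri.iota a * (Tri.iota b * x.val)
    rw [iota_mul, mul_assoc])
  smul_zero a := Subtype.ext (mul_zero _)
  smul_add a x y := Subtype.ext (mul_add _ _ _)
  add_smul a b x := Subtype.ext (by
    show Tri.iota (a + b) * x.val = Tri.iota a * x.val + Tri.iota b * x.val
    rw [iota_add, add_mul])
  zero_smul x := Subtype.ext (by
    show Tri.iota 0 * x.val = 0
    rw [iota_zero, zero_mul])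

lemma epsRight_smul_def (a : A) (x : epsRight S A M) :
    (a • x : epsRight S A M).val = Tri.iota a * x.val := rfl

/-- The right `A`-action on `Bε` via `x • a = x ι(a)`. -/
instance : Module Aᵐᵒᵖ (epsLeft S A M) where
  smul a x := ⟨x.val * Tri.iota a.unop, by
    have hx := x.2
    simp only [epsLeft, Submodule.mem_mk, AddSubmonoid.mem_mk, AddSubsemigroup.mem_mk,
      Set.mem_setOf_eq] at *
    rw [mul_assoc, iota_mul_eps]⟩
  one_smul x := Subtype.ext (by
    show x.val * Tri.iota (1 : A) = x.val
    rw [iota_one]; exact x.2)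
  mul_smul a b x := Subtype.ext (by
    show x.val * Tri.iota (b.unop * a.unop) = (x.val * Tri.iota b.unop) * Tri.iota a.unop
    rw [iota_mul, mul_assoc])
  smul_zero a := Subtype.ext (zero_mul _)
  smul_add a x y := Subtype.ext (add_mul _ _ _)
  add_smul a b x := Subtype.ext (by
    show x.val * Tri.iota (a.unop + b.unop) = x.val * Tri.iota a.unop + x.val * Tri.iota b.unop
    rw [iota_add, mul_add])
  zero_smul x := Subtype.ext (by
    show x.val * Tri.iota 0 = 0
    rw [iota_zero, mul_zero])

lemma epsLeft_smul_def (a : Aᵐᵒᵖ) (x : epsLeft S A M) :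
    (a • x : epsLeft S A M).val = x.val * Tri.iota a.unop := rfl

instance : SMulCommClass A (Tri S M A)ᵐᵒᵖ (epsRight S A M) :=
  ⟨fun a c x => Subtype.ext (by
    show Tri.iota a * (x.val * c.unop) = (Tri.iota a * x.val) * c.unop
    rw [mul_assoc])⟩

instance : SMulCommClass (Tri S M A)ᵐᵒᵖ A (epsRight S A M) := SMulCommClass.symm _ _ _

instance : SMulCommClass Aᵐᵒᵖ (Tri S M A) (epsLeft S A M) :=
  ⟨fun a c x => Subtype.ext (by
    show (c * x.val) * Tri.iota a.unop = c * (x.val * Tri.iota a.unop)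
    rw [mul_assoc])⟩

instance : SMulCommClass (Tri S M A) Aᵐᵒᵖ (epsLeft S A M) := SMulCommClass.symm _ _ _

end Corner

section Corner7

variable (k : Type u) [Field k]
variable (S : Type u) [Ring S] [Algebra k S] (A : Type u) [Ring A] [Algebra k A]
variable (M : Type u) [AddCommGroup M] [Module k M] [Module A M] [Module Sᵐᵒᵖ M]
variable [SMulCommClass A Sᵐᵒᵖ M] [IsScalarTower k A M] [IsScalarTower k Sᵐᵒᵖ M]

@[simp] lemma Tri.smul_s (c : k) (x : Tri S M A) : (c • x).s = c • x.s := by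
  show (Tri.algMap k c * x).s = c • x.s
  show algebraMap k S c * x.s = c • x.s
  rw [← Algebra.smul_def]

@[simp] lemma Tri.smul_m (c : k) (x : Tri S M A) : (c • x).m = c • x.m := by
  show (Tri.algMap k c * x).m = c • x.m
  show op x.s • (0 : M) + algebraMap k A c • x.m = c • x.m
  rw [smul_zero, zero_add, algebraMap_smul]

@[simp] lemma Tri.smul_a (c : k) (x : Tri S M A) : (c • x).a = c • x.a := by
  show (Tri.algMap k c * x).a = c • x.a
  show algebraMap k A c * x.a = c • x.a
  rw [← Algebra.smul_def]

/-- The embedding of `S` in the upper left corner. -/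
def iotaS (s : S) : Tri S M A := ⟨s, 0, 0⟩

@[simp] lemma iotaS_s (s : S) : (iotaS S A M s).s = s := rfl
@[simp] lemma iotaS_m (s : S) : (iotaS S A M s).m = 0 := rfl
@[simp] lemma iotaS_a (s : S) : (iotaS S A M s).a = 0 := rfl

@[simp] lemma iotaS_mul (s t : S) :
    iotaS S A M (s * t) = iotaS S A M s * iotaS S A M t := by ext <;> simp

@[simp] lemma iotaS_add (s t : S) :
    iotaS S A M (s + t) = iotaS S A M s + iotaS S A M t := by ext <;> simp

@[simp] lemma iotaS_zero : iotaS S A M (0 : S) = 0 := by ext <;> simp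

lemma iotaS_one : iotaS S A M (1 : S) = 1 - Tri.eps := by ext <;> simp

lemma iotaS_smul (c : k) (s : S) : iotaS S A M (c • s) = c • iotaS S A M s := by
  ext <;> simp

lemma oneEps_mul_iotaS (s : S) :
    (1 - Tri.eps : Tri S M A) * iotaS S A M s = iotaS S A M s := by ext <;> simp

lemma iotaS_mul_oneEps (s : S) :
    iotaS S A M s * (1 - Tri.eps : Tri S M A) = iotaS S A M s := by ext <;> simp

/-- The left `S`-action on `(1-ε)B` via `s • x = ι_S(s) x`. -/
instance : Module S (oneEpsRight S A M) where
  smul s x := ⟨iotaS S A M s * x.val, by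
    have hx := x.2
    simp only [oneEpsRight, Submodule.mem_mk, AddSubmonoid.mem_mk, AddSubsemigroup.mem_mk,
      Set.mem_setOf_eq] at *
    rw [← mul_assoc, oneEps_mul_iotaS]⟩
  one_smul x := Subtype.ext (by
    show iotaS S A M 1 * x.val = x.val
    rw [iotaS_one]; exact x.2)
  mul_smul s t x := Subtype.ext (by
    show iotaS S A M (s * t) * x.val = iotaS S A M s * (iotaS S A M t * x.val)
    rw [iotaS_mul, mul_assoc])
  smul_zero s := Subtype.ext (mul_zero _)
  smul_add s x y := Subtype.ext (mul_add _ _ _)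
  add_smul s t x := Subtype.ext (by
    show iotaS S A M (s + t) * x.val = iotaS S A M s * x.val + iotaS S A M t * x.val
    rw [iotaS_add, add_mul])
  zero_smul x := Subtype.ext (by
    show iotaS S A M 0 * x.val = 0
    rw [iotaS_zero, zero_mul])

lemma oneEpsRight_smul_def (s : S) (x : oneEpsRight S A M) :
    (s • x : oneEpsRight S A M).val = iotaS S A M s * x.val := rfl

instance : SMulCommClass S (Tri S M A)ᵐᵒᵖ (oneEpsRight S A M) :=
  ⟨fun s c x => Subtype.ext (by
    show iotaS S A M s * (x.val * c.unop) = (iotaS S A M s * x.val) * c.unop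
    rw [mul_assoc])⟩

instance : SMulCommClass (Tri S M A)ᵐᵒᵖ S (oneEpsRight S A M) := SMulCommClass.symm _ _ _

instance : IsScalarTower k S (oneEpsRight S A M) :=
  ⟨fun c s x => Subtype.ext (by
    show iotaS S A M (c • s) * x.val = c • (iotaS S A M s * x.val)
    rw [iotaS_smul, smul_mul_assoc])⟩

/-- The left ideal `B(1-ε)` of `B = Tri S M A`, as a left `B`-module. -/
def oneEpsLeft : Submodule (Tri S M A) (Tri S M A) where
  carrier := {x | x * (1 - Tri.eps) = x}
  add_mem' := fun {a} {b} ha hb => by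
    simp only [Set.mem_setOf_eq] at *
    rw [add_mul, ha, hb]
  zero_mem' := by simp
  smul_mem' := fun c {x} hx => by
    simp only [Set.mem_setOf_eq, smul_eq_mul] at *
    rw [mul_assoc, hx]

/-- The right `S`-action on `B(1-ε)` via `x • s = x ι_S(s)`. -/
instance : Module Sᵐᵒᵖ (oneEpsLeft S A M) where
  smul s x := ⟨x.val * iotaS S A M s.unop, by
    have hx := x.2
    simp only [oneEpsLeft, Submodule.mem_mk, AddSubmonoid.mem_mk, AddSubsemigroup.mem_mk,
      Set.mem_setOf_eq] at *
    rw [mul_assoc, iotaS_mul_oneEps]⟩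
  one_smul x := Subtype.ext (by
    show x.val * iotaS S A M 1 = x.val
    rw [iotaS_one]; exact x.2)
  mul_smul s t x := Subtype.ext (by
    show x.val * iotaS S A M (t.unop * s.unop) = (x.val * iotaS S A M t.unop) * iotaS S A M s.unop
    rw [iotaS_mul, mul_assoc])
  smul_zero s := Subtype.ext (zero_mul _)
  smul_add s x y := Subtype.ext (add_mul _ _ _)
  add_smul s t x := Subtype.ext (by
    show x.val * iotaS S A M (s.unop + t.unop) = x.val * iotaS S A M s.unop + x.val * iotaS S A M t.unop
    rw [iotaS_add, mul_add])
  zero_smul x := Subtype.ext (by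
    show x.val * iotaS S A M 0 = 0
    rw [iotaS_zero, mul_zero])

instance : SMulCommClass Sᵐᵒᵖ (Tri S M A) (oneEpsLeft S A M) :=
  ⟨fun s c x => Subtype.ext (by
    show (c * x.val) * iotaS S A M s.unop = c * (x.val * iotaS S A M s.unop)
    rw [mul_assoc])⟩

instance : SMulCommClass (Tri S M A) Sᵐᵒᵖ (oneEpsLeft S A M) := SMulCommClass.symm _ _ _

instance : IsScalarTower k Sᵐᵒᵖ (oneEpsLeft S A M) :=
  ⟨fun c s x => Subtype.ext (by
    show x.val * iotaS S A M (c • s).unop = c • (x.val * iotaS S A M s.unop)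
    rw [MulOpposite.unop_smul, iotaS_smul, mul_smul_comm])⟩

instance : IsScalarTower k Aᵐᵒᵖ (epsLeft S A M) :=
  ⟨fun c a x => Subtype.ext (by
    show x.val * Tri.iota (c • a).unop = c • (x.val * Tri.iota a.unop)
    have : (Tri.iota ((c • a).unop) : Tri S M A) = c • Tri.iota a.unop := by
      ext <;> simp [MulOpposite.unop_smul]
    rw [this, mul_smul_comm])⟩

instance : IsScalarTower k A (epsRight S A M) :=
  ⟨fun c a x => Subtype.ext (by
    show Tri.iota (c • a) * x.val = c • (Tri.iota a * x.val)
    have : (Tri.iota (c • a) : Tri S M A) = c • Tri.iota a := by ext <;> simp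
    rw [this, smul_mul_assoc])⟩

/-- The projection `B → A`, as a `k`-algebra homomorphism. -/
def projA : Tri S M A →ₐ[k] A where
  toFun x := x.a
  map_one' := rfl
  map_mul' x y := rfl
  map_zero' := rfl
  map_add' x y := rfl
  commutes' c := rfl

/-- The projection `B → S`, as a `k`-algebra homomorphism. -/
def projS : Tri S M A →ₐ[k] S where
  toFun x := x.s
  map_one' := rfl
  map_mul' x y := rfl
  map_zero' := rfl
  map_add' x y := rfl
  commutes' c := rfl

/-- The algebra homomorphism `Φ : B ⊗ Bᵒᵖ → A ⊗ Sᵒᵖ` along which the functor `F` is the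
restriction of scalars. -/
def Phi : (Tri S M A ⊗[k] (Tri S M A)ᵐᵒᵖ) →ₐ[k] (A ⊗[k] Sᵐᵒᵖ) :=
  Algebra.TensorProduct.map (projA k S A M) (AlgHom.op (projS k S A M))

end Corner7

attribute [local instance low] NC.leftModule NC.rightModule

section

open CategoryTheory

variable (k : Type u) [Field k]
variable (S : Type u) [Ring S] [Algebra k S] [FiniteDimensional k S]
variable (A : Type u) [Ring A] [Algebra k A] [FiniteDimensional k A]
variable (M : Type u) [AddCommGroup M] [Module k M] [Module A M] [Module Sᵐᵒᵖ M]
variable [SMulCommClass A Sᵐᵒᵖ M] [IsScalarTower k A M] [IsScalarTower k Sᵐᵒᵖ M]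
variable [FiniteDimensional k M]

/-- The functor `F` from `(A ⊗ Sᵒᵖ)`-modules to `(B ⊗ Bᵒᵖ)`-modules given by
restriction of scalars along `Φ`: it endows an `(A,S)`-bimodule `X` with the
`(B,B)`-bimodule structure `[[0,0],[X,0]]` via the projections `B → A` and `B → S`. -/
def Ffun : ModuleCat.{u} (A ⊗[k] Sᵐᵒᵖ) ⥤ ModuleCat.{u} (Tri S M A ⊗[k] (Tri S M A)ᵐᵒᵖ) :=
  ModuleCat.restrictScalars (Phi k S A M).toRingHom

/-! ### Auxiliary material for the proof -/

section AuxTri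

lemma mul_iota (b : Tri S M A) (a : A) : b * Tri.iota a = Tri.iota (b.a * a) := by
  ext <;> simp

lemma iotaS_mul_right (s : S) (c : Tri S M A) :
    iotaS S A M s * c = iotaS S A M (s * c.s) := by ext <;> simp

lemma phi_surjective : Function.Surjective (Phi k S A M) := by
  intro z
  induction z using TensorProduct.induction_on with
  | zero => exact ⟨0, map_zero _⟩
  | tmul a s =>
      refine ⟨Tri.iota a ⊗ₜ[k] op (iotaS S A M s.unop), ?_⟩
      rw [Phi, Algebra.TensorProduct.map_tmul]
      have h1 : projA k S A M (Tri.iota a) = a := rfl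
      have h2 : AlgHom.op (projS k S A M) (op (iotaS S A M s.unop)) = s := rfl
      rw [h1, h2]
  | add x y hx hy =>
      obtain ⟨u, hu⟩ := hx; obtain ⟨v, hv⟩ := hy
      exact ⟨u + v, by rw [map_add, hu, hv]⟩

/-- Fully faithfulness of `F`, from surjectivity of `Φ`. -/
def FfunFF : (Ffun k S A M).FullyFaithful where
  preimage {X Y} g :=
    ModuleCat.ofHom
    { toFun := g.hom
      map_add' := g.hom.map_add
      map_smul' := fun r x => by
        obtain ⟨t, rfl⟩ := phi_surjective k S A M r
        exact g.hom.map_smul t x }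
  map_preimage g := rfl
  preimage_map g := rfl

/-- The `k`-linear embedding `A → Tri S M A`. -/
def iotaLin : A →ₗ[k] Tri S M A where
  toFun := Tri.iota
  map_add' a b := iota_add S A M a b
  map_smul' c a := by ext <;> simp

/-- The `k`-linear embedding `Sᵐᵒᵖ → (Tri S M A)ᵐᵒᵖ`. -/
def iotaSOpLin : Sᵐᵒᵖ →ₗ[k] (Tri S M A)ᵐᵒᵖ where
  toFun s := op (iotaS S A M s.unop)
  map_add' s t := by
    rw [MulOpposite.unop_add, iotaS_add, MulOpposite.op_add]
  map_smul' c s := by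
    rw [MulOpposite.unop_smul, iotaS_smul, MulOpposite.op_smul, RingHom.id_apply]

/-- The `k`-linear section `ψ` of `Φ`. -/
def psiLin : (A ⊗[k] Sᵐᵒᵖ) →ₗ[k] (Tri S M A ⊗[k] (Tri S M A)ᵐᵒᵖ) :=
  TensorProduct.map (iotaLin k S A M) (iotaSOpLin k S A M)

lemma psi_mul (t : Tri S M A ⊗[k] (Tri S M A)ᵐᵒᵖ) (r : A ⊗[k] Sᵐᵒᵖ) :
    psiLin k S A M ((Phi k S A M) t * r) * (Tri.eps ⊗ₜ[k] op (1 - Tri.eps)) =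
      t * (psiLin k S A M r * (Tri.eps ⊗ₜ[k] op (1 - Tri.eps))) := by
  induction t using TensorProduct.induction_on with
  | zero => simp
  | add x y hx hy => rw [map_add, add_mul, map_add, add_mul, hx, hy, add_mul]
  | tmul b c =>
    induction r using TensorProduct.induction_on with
    | zero => simp
    | add x y hx hy => simp only [mul_add, map_add, add_mul, hx, hy]
    | tmul a s =>
      obtain ⟨s', rfl⟩ : ∃ s'', s = op s'' := ⟨s.unop, rfl⟩
      obtain ⟨c', rfl⟩ : ∃ c'', c = op c'' := ⟨c.unop, rfl⟩
      have hPhi : (Phi k S A M) (b ⊗ₜ[k] op c') = b.a ⊗ₜ[k] op c'.s := by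
        rw [Phi, Algebra.TensorProduct.map_tmul]; rfl
      have h1 : (op c'.s : Sᵐᵒᵖ) * op s' = op (s' * c'.s) := by rw [← MulOpposite.op_mul]
      have hps : ∀ (a₀ : A) (s₀ : S), psiLin k S A M (a₀ ⊗ₜ[k] op s₀)
          = Tri.iota a₀ ⊗ₜ[k] op (iotaS S A M s₀) := fun a₀ s₀ => by
        rw [psiLin, TensorProduct.map_tmul]; rfl
      have h2 : ∀ s₀ : S, (op (iotaS S A M s₀) : (Tri S M A)ᵐᵒᵖ) * op (1 - Tri.eps)
          = op (iotaS S A M s₀) := fun s₀ => by rw [← MulOpposite.op_mul, oneEps_mul_iotaS]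
      have h3 : (op c' : (Tri S M A)ᵐᵒᵖ) * op (iotaS S A M s')
          = op (iotaS S A M (s' * c'.s)) := by rw [← MulOpposite.op_mul, iotaS_mul_right]
      simp only [hPhi, Algebra.TensorProduct.tmul_mul_tmul, h1, hps, h2, h3,
        iota_mul_eps, mul_iota]

lemma phi_psi (r : A ⊗[k] Sᵐᵒᵖ) :
    (Phi k S A M) (psiLin k S A M r * (Tri.eps ⊗ₜ[k] op (1 - Tri.eps))) = r := by
  induction r using TensorProduct.induction_on with
  | zero => simp
  | add x y hx hy => simp only [map_add, add_mul, hx, hy]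
  | tmul a s =>
      obtain ⟨s', rfl⟩ : ∃ s'', s = op s'' := ⟨s.unop, rfl⟩
      have hps : psiLin k S A M (a ⊗ₜ[k] op s')
          = Tri.iota a ⊗ₜ[k] op (iotaS S A M s') := by
        rw [psiLin, TensorProduct.map_tmul]; rfl
      have h2 : (op (iotaS S A M s') : (Tri S M A)ᵐᵒᵖ) * op (1 - Tri.eps)
          = op (iotaS S A M s') := by rw [← MulOpposite.op_mul, oneEps_mul_iotaS]
      rw [hps, Algebra.TensorProduct.tmul_mul_tmul, iota_mul_eps, h2, Phi,
        Algebra.TensorProduct.map_tmul]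
      rfl

open CategoryTheory in
lemma restrict_projective (P : ModuleCat.{u} (A ⊗[k] Sᵐᵒᵖ)) (hP : Projective P) :
    Projective ((Ffun k S A M).obj P) := by
  classical
  set φ := (Phi k S A M).toRingHom with hφdef
  have hPR : Module.Projective (A ⊗[k] Sᵐᵒᵖ) P :=
    (IsProjective.iff_projective (R := A ⊗[k] Sᵐᵒᵖ) P).mpr
      (Projective.of_iso (Iso.refl P) hP)
  obtain ⟨sP, hsP⟩ := Module.projective_def'.mp hPR
  letI iR : Module (Tri S M A ⊗[k] (Tri S M A)ᵐᵒᵖ) (A ⊗[k] Sᵐᵒᵖ) := Module.compHom _ φ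
  letI iX : Module (Tri S M A ⊗[k] (Tri S M A)ᵐᵒᵖ) P := Module.compHom _ φ
  -- the splitting of `Φ` as maps of `T`-modules
  let σ : (A ⊗[k] Sᵐᵒᵖ) →ₗ[Tri S M A ⊗[k] (Tri S M A)ᵐᵒᵖ] (Tri S M A ⊗[k] (Tri S M A)ᵐᵒᵖ) :=
    { toFun := fun r => psiLin k S A M r * (Tri.eps ⊗ₜ[k] op (1 - Tri.eps))
      map_add' := fun x y => by rw [map_add, add_mul]
      map_smul' := fun t r => psi_mul k S A M t r }
  let π : (Tri S M A ⊗[k] (Tri S M A)ᵐᵒᵖ) →ₗ[Tri S M A ⊗[k] (Tri S M A)ᵐᵒᵖ] (A ⊗[k] Sᵐᵒᵖ) :=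
    { toFun := φ
      map_add' := map_add φ
      map_smul' := fun t x => map_mul φ t x }
  have hcomp : π.comp σ = LinearMap.id := LinearMap.ext fun r => phi_psi k S A M r
  haveI hRproj : Module.Projective (Tri S M A ⊗[k] (Tri S M A)ᵐᵒᵖ) (A ⊗[k] Sᵐᵒᵖ) :=
    Module.Projective.of_split σ π hcomp
  haveI hFR : Module.Projective (Tri S M A ⊗[k] (Tri S M A)ᵐᵒᵖ) (P →₀ (A ⊗[k] Sᵐᵒᵖ)) :=
    Module.Projective.of_split (Finsupp.mapRange.linearMap σ) (Finsupp.mapRange.linearMap π)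
      (by rw [← Finsupp.mapRange.linearMap_comp, hcomp, Finsupp.mapRange.linearMap_id])
  let sT : P →ₗ[Tri S M A ⊗[k] (Tri S M A)ᵐᵒᵖ] (P →₀ (A ⊗[k] Sᵐᵒᵖ)) :=
    { toFun := sP
      map_add' := sP.map_add
      map_smul' := fun t x => sP.map_smul (φ t) x }
  let πT : (P →₀ (A ⊗[k] Sᵐᵒᵖ)) →ₗ[Tri S M A ⊗[k] (Tri S M A)ᵐᵒᵖ] P :=
    { toFun := Finsupp.linearCombination _ id
      map_add' := map_add _
      map_smul' := fun t f => (Finsupp.linearCombination _ id).map_smul (φ t) f }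
  haveI hXproj : Module.Projective (Tri S M A ⊗[k] (Tri S M A)ᵐᵒᵖ) P :=
    Module.Projective.of_split sT πT
      (LinearMap.ext fun x => DFunLike.congr_fun hsP x)
  have hc : Projective (ModuleCat.of (Tri S M A ⊗[k] (Tri S M A)ᵐᵒᵖ) P) :=
    (IsProjective.iff_projective (R := Tri S M A ⊗[k] (Tri S M A)ᵐᵒᵖ) P).mp hXproj
  refine Projective.of_iso ?_ hc
  exact
    { hom := ModuleCat.ofHom { toFun := _root_.id, map_add' := fun _ _ => rfl, map_smul' := fun _ _ => rfl }
      inv := ModuleCat.ofHom { toFun := _root_.id, map_add' := fun _ _ => rfl, map_smul' := fun _ _ => rfl }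
      hom_inv_id := rfl
      inv_hom_id := rfl }

end AuxTri

section EtaSection

variable (X : Type u) [AddCommGroup X] [Module k X] [Module A X] [Module Sᵐᵒᵖ X]
  [SMulCommClass A Sᵐᵒᵖ X] [SMulCommClass Sᵐᵒᵖ A X] [IsScalarTower k A X]
  [IsScalarTower k Sᵐᵒᵖ X]

/-- The idempotent `ε` as an element of `Bε`. -/
def epsL : epsLeft S A M := ⟨Tri.eps, Tri.eps_idem⟩

/-- The idempotent `1 - ε` as an element of `(1-ε)B`. -/
def oneEpsR : oneEpsRight S A M := ⟨1 - Tri.eps, by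
  show (1 - Tri.eps) * (1 - Tri.eps) = (1 - Tri.eps : Tri S M A)
  have h : (Tri.eps : Tri S M A) * (1 - Tri.eps) = 0 := by
    rw [mul_sub, mul_one, Tri.eps_idem, sub_self]
  rw [sub_mul, one_mul, h, sub_zero]⟩

lemma epsLeft_val_eq (u : epsLeft S A M) : u.val = Tri.iota u.val.a := by
  have h : u.val * Tri.eps = u.val := u.2
  have hs : u.val.s = 0 := by rw [← h]; simp
  have hm : u.val.m = 0 := by rw [← h]; simp
  ext
  · rw [hs]; simp
  · rw [hm]; simp
  · simp

lemma oneEpsRight_val_eq (v : oneEpsRight S A M) : v.val = iotaS S A M v.val.s := by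
  have h : (1 - Tri.eps) * v.val = v.val := v.2
  have hm : v.val.m = 0 := by rw [← h]; simp
  have ha : v.val.a = 0 := by rw [← h]; simp
  ext
  · simp
  · rw [hm]; simp
  · rw [ha]; simp

/-- The bilinear map `(u, x) ↦ u.a • x`. -/
def innerF : epsLeft S A M →ₗ[k] X →ₗ[k] X where
  toFun u :=
    { toFun := fun x => u.val.a • x
      map_add' := fun x y => smul_add _ x y
      map_smul' := fun c x => smul_comm _ c x }
  map_add' u v := LinearMap.ext fun x => by
    show ((u + v).val).a • x = u.val.a • x + v.val.a • x
    rw [Submodule.coe_add, Tri.add_a, add_smul]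
  map_smul' c u := LinearMap.ext fun x => by
    show ((c • u).val).a • x = c • (u.val.a • x)
    rw [SetLike.val_smul_of_tower, Tri.smul_a, smul_assoc]

/-- `Bε ⊗_A X → X`. -/
def innerLift : NC.Tensor k A (epsLeft S A M) X →ₗ[k] X :=
  NC.lift k A (innerF k S A M X) (fun a u x => by
    show ((op a • u : epsLeft S A M)).val.a • x = u.val.a • (a • x)
    rw [epsLeft_smul_def]
    show (u.val * Tri.iota a).a • x = u.val.a • (a • x)
    rw [Tri.mul_a, Tri.iota_a, mul_smul])

lemma innerLift_mk (u : epsLeft S A M) (x : X) :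
    innerLift k S A M X (NC.mk k A u x) = u.val.a • x := rfl

lemma innerLift_smulS (s : Sᵐᵒᵖ) (t : NC.Tensor k A (epsLeft S A M) X) :
    innerLift k S A M X (s • t) = s • innerLift k S A M X t := by
  induction t using NC.induction_on with
  | zero => rw [smul_zero, map_zero, smul_zero]
  | basic u x =>
      rw [NC.smul_mk_right k A (epsLeft S A M) S s u x, innerLift_mk, innerLift_mk]
      exact (smul_comm _ _ _)
  | add x y hx hy => rw [smul_add, map_add, hx, hy, map_add, smul_add]

lemma innerLift_smulB (b : Tri S M A) (t : NC.Tensor k A (epsLeft S A M) X) :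
    innerLift k S A M X (b • t) = b.a • innerLift k S A M X t := by
  induction t using NC.induction_on with
  | zero => rw [smul_zero, map_zero, smul_zero]
  | basic u x =>
      rw [NC.smul_mk_left k A (epsLeft S A M) X (Tri S M A) b u x, innerLift_mk, innerLift_mk]
      show ((b • u : epsLeft S A M)).val.a • x = b.a • u.val.a • x
      rw [SetLike.val_smul, smul_eq_mul, Tri.mul_a, mul_smul]
  | add x y hx hy => rw [smul_add, map_add, hx, hy, map_add, smul_add]

/-- The bilinear map `(t, v) ↦ op v.s • innerLift t`. -/
def outerF : NC.Tensor k A (epsLeft S A M) X →ₗ[k]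
    (oneEpsRight S A M →ₗ[k] X) where
  toFun t :=
    { toFun := fun v => op v.val.s • innerLift k S A M X t
      map_add' := fun v w => by
        rw [Submodule.coe_add, Tri.add_s, MulOpposite.op_add, add_smul]
      map_smul' := fun c v => by
        rw [SetLike.val_smul_of_tower, Tri.smul_s, MulOpposite.op_smul, smul_assoc,
          RingHom.id_apply] }
  map_add' t t' := LinearMap.ext fun v => by
    show op v.val.s • innerLift k S A M X (t + t')
        = op v.val.s • innerLift k S A M X t + op v.val.s • innerLift k S A M X t'
    rw [map_add, smul_add]
  map_smul' c t := LinearMap.ext fun v => by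
    show op v.val.s • innerLift k S A M X (c • t)
        = c • (op v.val.s • innerLift k S A M X t)
    rw [map_smul]
    exact smul_comm _ c _

/-- The map `η : Bε ⊗_A X ⊗_S (1-ε)B → X`. -/
def etaLin :
    NC.Tensor k S (NC.Tensor k A (epsLeft S A M) X) (oneEpsRight S A M) →ₗ[k] X :=
  NC.lift k S (outerF k S A M X) (fun s m v => by
    show op v.val.s • innerLift k S A M X ((op s : Sᵐᵒᵖ) • m)
        = op ((s • v : oneEpsRight S A M)).val.s • innerLift k S A M X m
    rw [innerLift_smulS, smul_smul, ← MulOpposite.op_mul, oneEpsRight_smul_def]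
    show op (s * v.val.s) • innerLift k S A M X m
        = op ((iotaS S A M s * v.val).s) • innerLift k S A M X m
    rw [Tri.mul_s, iotaS_s])

lemma etaLin_mk (m : NC.Tensor k A (epsLeft S A M) X) (v : oneEpsRight S A M) :
    etaLin k S A M X (NC.mk k S m v) = op v.val.s • innerLift k S A M X m := rfl

/-- The inverse of `η`. -/
def etaInv (x : X) :
    NC.Tensor k S (NC.Tensor k A (epsLeft S A M) X) (oneEpsRight S A M) :=
  NC.mk k S (NC.mk k A (epsL S A M) x) (oneEpsR S A M)

lemma etaInv_add (x y : X) :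
    etaInv k S A M X (x + y) = etaInv k S A M X x + etaInv k S A M X y := by
  rw [etaInv, etaInv, etaInv, NC.mk_add_right, NC.mk_add_left]

lemma eta_left_inv (t : NC.Tensor k S (NC.Tensor k A (epsLeft S A M) X)
    (oneEpsRight S A M)) : etaInv k S A M X (etaLin k S A M X t) = t := by
  induction t using NC.induction_on with
  | zero =>
      rw [map_zero, etaInv, NC.mk_zero_right, NC.mk_zero_left]
  | add x y hx hy => rw [map_add, etaInv_add, hx, hy]
  | basic m v =>
      induction m using NC.induction_on with
      | zero =>
          rw [NC.mk_zero_left, map_zero, etaInv, NC.mk_zero_right, NC.mk_zero_left]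
      | add m₁ m₂ h₁ h₂ =>
          rw [NC.mk_add_left, map_add, etaInv_add, h₁, h₂]
      | basic u x =>
          rw [etaLin_mk, innerLift_mk, etaInv]
          have s1 : NC.mk k A (epsL S A M) (op v.val.s • (u.val.a • x))
              = (op v.val.s : Sᵐᵒᵖ) • NC.mk k A (epsL S A M) (u.val.a • x) :=
            (NC.smul_mk_right k A (epsLeft S A M) S _ _ _).symm
          rw [s1, NC.mk_balanced k S v.val.s]
          have s2 : v.val.s • (oneEpsR S A M) = v := by
            apply Subtype.ext
            rw [oneEpsRight_smul_def]
            show iotaS S A M v.val.s * (1 - Tri.eps) = v.val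
            rw [iotaS_mul_oneEps, ← oneEpsRight_val_eq]
          rw [s2]
          have s3 : NC.mk k A (epsL S A M) (u.val.a • x)
              = NC.mk k A ((op u.val.a : Aᵐᵒᵖ) • epsL S A M) x :=
            (NC.mk_balanced k A u.val.a (epsL S A M) x).symm
          have s4 : (op u.val.a : Aᵐᵒᵖ) • epsL S A M = u := by
            apply Subtype.ext
            rw [epsLeft_smul_def]
            show Tri.eps * Tri.iota u.val.a = u.val
            rw [eps_mul_iota, ← epsLeft_val_eq]
          rw [s3, s4]

lemma eta_right_inv (x : X) : etaLin k S A M X (etaInv k S A M X x) = x := by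
  rw [etaInv, etaLin_mk, innerLift_mk]
  show op ((oneEpsR S A M).val.s) • ((epsL S A M).val.a • x) = x
  have h1 : (oneEpsR S A M).val.s = 1 := by
    show (1 - Tri.eps : Tri S M A).s = 1
    rw [Tri.sub_s, Tri.one_s, Tri.eps_s, sub_zero]
  have h2 : (epsL S A M).val.a = 1 := rfl
  rw [h1, h2, one_smul, op_one, one_smul]

/-- The natural additive isomorphism `Bε ⊗_A X ⊗_S (1-ε)B ≃ X`. -/
def etaEquiv :
    NC.Tensor k S (NC.Tensor k A (epsLeft S A M) X) (oneEpsRight S A M) ≃+ X where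
  toFun := etaLin k S A M X
  invFun := etaInv k S A M X
  left_inv := eta_left_inv k S A M X
  right_inv := eta_right_inv k S A M X
  map_add' := map_add _

lemma etaEquiv_smulB (b : Tri S M A)
    (t : NC.Tensor k S (NC.Tensor k A (epsLeft S A M) X) (oneEpsRight S A M)) :
    etaEquiv k S A M X (b • t) = b.a • etaEquiv k S A M X t := by
  show etaLin k S A M X (b • t) = b.a • etaLin k S A M X t
  induction t using NC.induction_on with
  | zero => rw [smul_zero, map_zero, smul_zero]
  | add x y hx hy => rw [smul_add, map_add, hx, hy, map_add, smul_add]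
  | basic m v =>
      rw [NC.smul_mk_left k S (NC.Tensor k A (epsLeft S A M) X) (oneEpsRight S A M)
        (Tri S M A) b m v, etaLin_mk, etaLin_mk, innerLift_smulB, smul_comm]

lemma etaEquiv_smulBop (b : Tri S M A)
    (t : NC.Tensor k S (NC.Tensor k A (epsLeft S A M) X) (oneEpsRight S A M)) :
    etaEquiv k S A M X (op b • t) = op b.s • etaEquiv k S A M X t := by
  show etaLin k S A M X (op b • t) = op b.s • etaLin k S A M X t
  induction t using NC.induction_on with
  | zero => rw [smul_zero, map_zero, smul_zero]
  | add x y hx hy => rw [smul_add, map_add, hx, hy, map_add, smul_add]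
  | basic m v =>
      rw [NC.smul_mk_right k S (NC.Tensor k A (epsLeft S A M) X) (Tri S M A)
        (op b) m v, etaLin_mk, etaLin_mk]
      have h1 : ((op b • v : oneEpsRight S A M)).val.s = v.val.s * b.s := by
        show (v.val * b).s = v.val.s * b.s
        rw [Tri.mul_s]
      rw [h1, MulOpposite.op_mul, mul_smul]

end EtaSection

/-- The functor `F` sending an `(A,S)`-bimodule `X` to the
`(B,B)`-bimodule `[[0,0],[X,0]]` is naturally isomorphic to
`Bε ⊗_A (−) ⊗_S (1−ε)B`; it is exact, fully faithful, and sends projective objects to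
projective objects. -/
theorem stmt7 :
    Nonempty (Limits.PreservesFiniteLimits (Ffun k S A M)) ∧
    Nonempty (Limits.PreservesFiniteColimits (Ffun k S A M)) ∧
    Nonempty (Ffun k S A M).FullyFaithful ∧
    (∀ P : ModuleCat.{u} (A ⊗[k] Sᵐᵒᵖ),
      Projective P → Projective ((Ffun k S A M).obj P)) ∧
    ∃ η : ∀ (X : Type u) [AddCommGroup X] [Module k X] [Module A X] [Module Sᵐᵒᵖ X] [SMulCommClass A Sᵐᵒᵖ X] [SMulCommClass Sᵐᵒᵖ A X] [IsScalarTower k A X] [IsScalarTower k Sᵐᵒᵖ X],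
        NC.Tensor k S (NC.Tensor k A (epsLeft S A M) X) (oneEpsRight S A M) ≃+ X,
      (∀ (X : Type u) [AddCommGroup X] [Module k X] [Module A X] [Module Sᵐᵒᵖ X] [SMulCommClass A Sᵐᵒᵖ X] [SMulCommClass Sᵐᵒᵖ A X] [IsScalarTower k A X] [IsScalarTower k Sᵐᵒᵖ X] (b : Tri S M A)
          (t : NC.Tensor k S (NC.Tensor k A (epsLeft S A M) X) (oneEpsRight S A M)),
        η X (b • t) = b.a • η X t) ∧
      (∀ (X : Type u) [AddCommGroup X] [Module k X] [Module A X] [Module Sᵐᵒᵖ X] [SMulCommClass A Sᵐᵒᵖ X] [SMulCommClass Sᵐᵒᵖ A X] [IsScalarTower k A X] [IsScalarTower k Sᵐᵒᵖ X] (b : Tri S M A)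
          (t : NC.Tensor k S (NC.Tensor k A (epsLeft S A M) X) (oneEpsRight S A M)),
        η X (op b • t) = op b.s • η X t) ∧
      (∀ (X : Type u) [AddCommGroup X] [Module k X] [Module A X] [Module Sᵐᵒᵖ X] [SMulCommClass A Sᵐᵒᵖ X] [SMulCommClass Sᵐᵒᵖ A X] [IsScalarTower k A X] [IsScalarTower k Sᵐᵒᵖ X] (Y : Type u) [AddCommGroup Y] [Module k Y] [Module A Y] [Module Sᵐᵒᵖ Y] [SMulCommClass A Sᵐᵒᵖ Y] [SMulCommClass Sᵐᵒᵖ A Y] [IsScalarTower k A Y] [IsScalarTower k Sᵐᵒᵖ Y]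
          (f : X →+ Y),
        (∀ (a : A) (x : X), f (a • x) = a • f x) →
        (∀ (s : Sᵐᵒᵖ) (x : X), f (s • x) = s • f x) →
        ∀ (u : epsLeft S A M) (x : X) (v : oneEpsRight S A M),
          η Y (NC.mk k S (NC.mk k A u (f x)) v) = f (η X (NC.mk k S (NC.mk k A u x) v))) := by
  refine ⟨⟨⟨fun J _ _ => ⟨fun {F} =>
      (ModuleCat.preservesLimit_restrictScalars (Phi k S A M).toRingHom F :
        Limits.PreservesLimit F (ModuleCat.restrictScalars (Phi k S A M).toRingHom))⟩⟩⟩,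
    ⟨⟨fun J _ _ => ⟨fun {F} =>
      (ModuleCat.preservesColimit_restrictScalars (Phi k S A M).toRingHom F :
        Limits.PreservesColimit F (ModuleCat.restrictScalars (Phi k S A M).toRingHom))⟩⟩⟩,
    ⟨FfunFF k S A M⟩, restrict_projective k S A M,
    ⟨fun X _ _ _ _ _ _ _ _ => etaEquiv k S A M X, ?_, ?_, ?_⟩⟩
  · intro X _ _ _ _ _ _ _ _ b t
    exact etaEquiv_smulB k S A M X b t
  · intro X _ _ _ _ _ _ _ _ b t
    exact etaEquiv_smulBop k S A M X b t
  · intro X _ _ _ _ _ _ _ _ Y _ _ _ _ _ _ _ _ f hA hS u x v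
    have hL : etaEquiv k S A M Y (NC.mk k S (NC.mk k A u (f x)) v)
        = op v.val.s • (u.val.a • f x) := rfl
    have hR : etaEquiv k S A M X (NC.mk k S (NC.mk k A u x) v)
        = op v.val.s • (u.val.a • x) := rfl
    rw [hL, hR, ← hA, ← hS]

end
end
end

section
/- Let A be a k-algebra finitely generated projective over k, P a projective (A,A)-bimodule (that is, a projective A⊗A^op-module), and Y a left A-module. Then Hom_A(P, Y) (left A-module homomorphisms, with A-module structure via the right A-action on P) is an injective left A-module. -/
set_option linter.unusedSectionVars false
set_option maxHeartbeats 1000000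
set_option synthInstance.maxHeartbeats 400000

open MulOpposite
open scoped TensorProduct

universe u

noncomputable section

section HomLeftModule

variable (R C : Type u) [Ring R] [Ring C]
variable (X : Type u) [AddCommGroup X] [Module R X] [Module Cᵐᵒᵖ X] [SMulCommClass Cᵐᵒᵖ R X]
variable (Y : Type u) [AddCommGroup Y] [Module R Y]

/-- Right multiplication by `c : C` on `X`, as an `R`-linear endomorphism. -/
def opSmul (c : C) : X →ₗ[R] X where
  toFun x := op c • x
  map_add' := smul_add (op c)
  map_smul' r x := (smul_comm (op c) r x)

/-- The left `C`-module structure on `Hom_R(X, Y)` induced by the right `C`-action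
on the domain `X`, i.e. `(c • f) x = f (x · c)`. -/
def homLeftModule : Module C (X →ₗ[R] Y) where
  smul c f := f.comp (opSmul R C X c)
  one_smul f := by
    ext x
    show f (op (1 : C) • x) = f x
    rw [op_one, one_smul]
  mul_smul c c' f := by
    ext x
    show f (op (c * c') • x) = f (op c' • op c • x)
    rw [op_mul, mul_smul]
  smul_zero c := by ext x; rfl
  smul_add c f g := by ext x; rfl
  add_smul c c' f := by
    ext x
    show f (op (c + c') • x) = f (op c • x) + f (op c' • x)
    rw [op_add, add_smul, map_add]
  zero_smul f := by
    ext x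
    show f (op (0 : C) • x) = 0
    rw [op_zero, zero_smul, map_zero]

end HomLeftModule


section AuxHom

variable (k : Type u) [Field k] (A : Type u) [Ring A] [Algebra k A]
variable (X : Type u) [AddCommGroup X] [Module k X] [Module A X] [IsScalarTower k A X]
variable (Y : Type u) [AddCommGroup Y] [Module k Y]

/-- Left multiplication by `a : A` on `X`, as a `k`-linear endomorphism. -/
def mulLeftLin (a : A) : X →ₗ[k] X where
  toFun x := a • x
  map_add' := smul_add a
  map_smul' c x := smul_comm a c x

/-- The left `Aᵐᵒᵖ`-module structure on `Hom_k(X, Y)` induced by the left `A`-action on the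
domain `X`, i.e. `(op b • f) x = f (b • x)`. -/
def homOpModule : Module Aᵐᵒᵖ (X →ₗ[k] Y) where
  smul b f := f.comp (mulLeftLin k A X (unop b))
  one_smul f := by
    ext x
    show f ((1 : A) • x) = f x
    rw [one_smul]
  mul_smul b b' f := by
    ext x
    show f (unop (b * b') • x) = f (unop b' • unop b • x)
    rw [unop_mul, mul_smul]
  smul_zero b := by ext x; rfl
  smul_add b f g := by ext x; rfl
  add_smul b b' f := by
    ext x
    show f (unop (b + b') • x) = f (unop b • x) + f (unop b' • x)
    rw [unop_add, add_smul, map_add]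
  zero_smul f := by
    ext x
    show f (unop (0 : Aᵐᵒᵖ) • x) = 0
    rw [unop_zero, zero_smul, map_zero]

end AuxHom

section

variable (k : Type u) [Field k] (A : Type u) [Ring A] [Algebra k A] [FiniteDimensional k A]
variable (P : Type u) [AddCommGroup P] [Module (A ⊗[k] Aᵐᵒᵖ) P]

/-- The left `A`-module structure on an `(A,A)`-bimodule. -/
def leftFromEnv : Module A P :=
  Module.compHom P (Algebra.TensorProduct.includeLeftRingHom : A →+* A ⊗[k] Aᵐᵒᵖ)

/-- The right `A`-module structure on an `(A,A)`-bimodule. -/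
def rightFromEnv : Module Aᵐᵒᵖ P :=
  Module.compHom P (Algebra.TensorProduct.includeRight : Aᵐᵒᵖ →ₐ[k] A ⊗[k] Aᵐᵒᵖ).toRingHom

variable (Y : Type u) [AddCommGroup Y] [Module A Y]

/-- Let `k` be a field, `A` a finite-dimensional `k`-algebra, `P` a
projective `(A,A)`-bimodule (i.e. a projective `A ⊗ Aᵒᵖ`-module) and `Y` a left `A`-module.
Then `Hom_A(P, Y)` (left `A`-module homomorphisms, with `A`-module structure via the right
`A`-action on `P`) is an injective left `A`-module. -/
theorem stmt13 (hP : Module.Projective (A ⊗[k] Aᵐᵒᵖ) P) :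
    letI : Module A P := leftFromEnv k A P
    letI : Module Aᵐᵒᵖ P := rightFromEnv k A P
    letI : SMulCommClass Aᵐᵒᵖ A P := ⟨fun a b p => by
        show ((1 : A) ⊗ₜ[k] a) • (b ⊗ₜ[k] (1 : Aᵐᵒᵖ)) • p
            = (b ⊗ₜ[k] (1 : Aᵐᵒᵖ)) • ((1 : A) ⊗ₜ[k] a) • p
        rw [← mul_smul, ← mul_smul, Algebra.TensorProduct.tmul_mul_tmul,
          Algebra.TensorProduct.tmul_mul_tmul, one_mul, mul_one, one_mul, mul_one]⟩
    letI : Module A (P →ₗ[A] Y) := homLeftModule A A P Y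
    Module.Injective A (P →ₗ[A] Y) := by
  letI : Module A P := leftFromEnv k A P
  letI : Module Aᵐᵒᵖ P := rightFromEnv k A P
  letI : SMulCommClass Aᵐᵒᵖ A P := ⟨fun a b p => by
      show ((1 : A) ⊗ₜ[k] a) • (b ⊗ₜ[k] (1 : Aᵐᵒᵖ)) • p
          = (b ⊗ₜ[k] (1 : Aᵐᵒᵖ)) • ((1 : A) ⊗ₜ[k] a) • p
      rw [← mul_smul, ← mul_smul, Algebra.TensorProduct.tmul_mul_tmul,
        Algebra.TensorProduct.tmul_mul_tmul, one_mul, mul_one, one_mul, mul_one]⟩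
  letI : Module A (P →ₗ[A] Y) := homLeftModule A A P Y
  haveI := hP
  constructor
  intro X X' _ _ _ _ i hi f
  letI : Module k X := Module.compHom X (algebraMap k A)
  letI : Module k X' := Module.compHom X' (algebraMap k A)
  letI : Module k Y := Module.compHom Y (algebraMap k A)
  letI : IsScalarTower k A X := ⟨fun c a x => by
      rw [Algebra.smul_def, mul_smul]; rfl⟩
  letI : IsScalarTower k A X' := ⟨fun c a x => by
      rw [Algebra.smul_def, mul_smul]; rfl⟩
  letI : IsScalarTower k A Y := ⟨fun c a y => by
      rw [Algebra.smul_def, mul_smul]; rfl⟩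
  letI : Module Aᵐᵒᵖ (X →ₗ[k] Y) := homOpModule k A X Y
  letI : Module Aᵐᵒᵖ (X' →ₗ[k] Y) := homOpModule k A X' Y
  letI : SMulCommClass A Aᵐᵒᵖ (X →ₗ[k] Y) := ⟨fun a b h => LinearMap.ext fun x => rfl⟩
  letI : SMulCommClass A Aᵐᵒᵖ (X' →ₗ[k] Y) := ⟨fun a b h => LinearMap.ext fun x => rfl⟩
  letI : IsScalarTower k Aᵐᵒᵖ (X →ₗ[k] Y) := ⟨fun c b h => LinearMap.ext fun x => by
      show h ((c • unop b) • x) = c • h (unop b • x)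
      rw [Algebra.smul_def, mul_smul]
      exact h.map_smul c _⟩
  letI : IsScalarTower k Aᵐᵒᵖ (X' →ₗ[k] Y) := ⟨fun c b h => LinearMap.ext fun x => by
      show h ((c • unop b) • x) = c • h (unop b • x)
      rw [Algebra.smul_def, mul_smul]
      exact h.map_smul c _⟩
  letI : Module (A ⊗[k] Aᵐᵒᵖ) (X →ₗ[k] Y) := TensorProduct.Algebra.module
  letI : Module (A ⊗[k] Aᵐᵒᵖ) (X' →ₗ[k] Y) := TensorProduct.Algebra.module
  -- the restriction map along `i`, as an `A ⊗ Aᵐᵒᵖ`-linear map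
  let ik : X →ₗ[k] X' := i.restrictScalars k
  have hAcomp : ∀ (a : A) (h : X' →ₗ[k] Y), (a • h).comp ik = a • (h.comp ik) :=
    fun a h => LinearMap.ext fun x => rfl
  have hBcomp : ∀ (b : Aᵐᵒᵖ) (h : X' →ₗ[k] Y), (b • h).comp ik = b • (h.comp ik) :=
    fun b h => LinearMap.ext fun x => by
      show h (unop b • i x) = h (i (unop b • x))
      rw [i.map_smul]
  have hcomp : ∀ (e : A ⊗[k] Aᵐᵒᵖ) (h : X' →ₗ[k] Y), (e • h).comp ik = e • (h.comp ik) := by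
    intro e h
    induction e using TensorProduct.induction_on with
    | zero => rw [zero_smul (A ⊗[k] Aᵐᵒᵖ) h, zero_smul (A ⊗[k] Aᵐᵒᵖ) (h.comp ik), LinearMap.zero_comp]
    | tmul a b =>
        rw [TensorProduct.Algebra.smul_def, TensorProduct.Algebra.smul_def, hAcomp, hBcomp]
    | add e₁ e₂ ih₁ ih₂ =>
        rw [add_smul, add_smul, LinearMap.add_comp, ih₁, ih₂]
  let Φ : (X' →ₗ[k] Y) →ₗ[A ⊗[k] Aᵐᵒᵖ] (X →ₗ[k] Y) :=
    { toFun := fun h => h.comp ik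
      map_add' := fun h₁ h₂ => LinearMap.ext fun x => rfl
      map_smul' := fun e h => hcomp e h }
  have hΦ : Function.Surjective Φ := by
    obtain ⟨r, hr⟩ := ik.exists_leftInverse_of_injective (by
      rw [LinearMap.ker_eq_bot]; exact hi)
    intro h
    refine ⟨h.comp r, LinearMap.ext fun x => ?_⟩
    show h (r (ik x)) = h x
    rw [show r (ik x) = x from LinearMap.congr_fun hr x]
  -- the adjoint of `f`
  have hL : ∀ (a : A) (p : P), (a ⊗ₜ[k] (1 : Aᵐᵒᵖ)) • p = a • p := fun _ _ => rfl
  have hR : ∀ (b : Aᵐᵒᵖ) (p : P), ((1 : A) ⊗ₜ[k] b) • p = op (unop b) • p := fun _ _ => rfl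
  let b0 : P → (X →ₗ[k] Y) := fun p =>
    { toFun := fun x => f x p
      map_add' := fun x₁ x₂ => LinearMap.congr_fun (f.map_add x₁ x₂) p
      map_smul' := fun c x => by
        simp only [RingHom.id_apply]
        rw [← algebraMap_smul A c x, f.map_smul]
        show (f x) (((1 : A) ⊗ₜ[k] op (algebraMap k A c)) • p) = c • f x p
        have h2 : (1 : A) ⊗ₜ[k] op (algebraMap k A c)
            = (algebraMap k A c) ⊗ₜ[k] (1 : Aᵐᵒᵖ) := by
          rw [← MulOpposite.algebraMap_apply, Algebra.algebraMap_eq_smul_one,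
            TensorProduct.tmul_smul, TensorProduct.smul_tmul',
            ← Algebra.algebraMap_eq_smul_one]
        rw [h2, hL, (f x).map_smul, algebraMap_smul] }
  have b0_add : ∀ p q, b0 (p + q) = b0 p + b0 q :=
    fun p q => LinearMap.ext fun x => (f x).map_add p q
  have b0_smul : ∀ (e : A ⊗[k] Aᵐᵒᵖ) (p : P), b0 (e • p) = e • b0 p := by
    intro e p
    induction e using TensorProduct.induction_on with
    | zero =>
        rw [zero_smul (A ⊗[k] Aᵐᵒᵖ) p, zero_smul (A ⊗[k] Aᵐᵒᵖ) (b0 p)]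
        exact LinearMap.ext fun x => (f x).map_zero
    | tmul a b =>
        refine LinearMap.ext fun x => ?_
        rw [TensorProduct.Algebra.smul_def]
        show f x ((a ⊗ₜ[k] b) • p) = a • f (unop b • x) p
        rw [f.map_smul]
        show f x ((a ⊗ₜ[k] b) • p) = a • f x (((1 : A) ⊗ₜ[k] b) • p)
        rw [show a • f x (((1 : A) ⊗ₜ[k] b) • p)
            = f x ((a ⊗ₜ[k] (1 : Aᵐᵒᵖ)) • ((1 : A) ⊗ₜ[k] b) • p) from
          ((f x).map_smul a _).symm]
        rw [← mul_smul, Algebra.TensorProduct.tmul_mul_tmul, one_mul, mul_one]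
    | add e₁ e₂ ih₁ ih₂ =>
        rw [add_smul, b0_add, ih₁, ih₂, add_smul]
  let β : P →ₗ[A ⊗[k] Aᵐᵒᵖ] (X →ₗ[k] Y) :=
    { toFun := b0
      map_add' := b0_add
      map_smul' := b0_smul }
  obtain ⟨β', hβ'⟩ := Module.projective_lifting_property Φ β hΦ
  let g0 : X' → (P →ₗ[A] Y) := fun x' =>
    { toFun := fun p => β' p x'
      map_add' := fun p q => LinearMap.congr_fun (β'.map_add p q) x'
      map_smul' := fun a p => by
        simp only [RingHom.id_apply]
        show β' ((a ⊗ₜ[k] (1 : Aᵐᵒᵖ)) • p) x' = a • β' p x'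
        rw [β'.map_smul, TensorProduct.Algebra.smul_def, one_smul]
        rfl }
  let g : X' →ₗ[A] (P →ₗ[A] Y) :=
    { toFun := g0
      map_add' := fun x'₁ x'₂ => LinearMap.ext fun p => (β' p).map_add x'₁ x'₂
      map_smul' := fun a x' => LinearMap.ext fun p => by
        simp only [RingHom.id_apply]
        show β' p (a • x') = β' (((1 : A) ⊗ₜ[k] op a) • p) x'
        rw [β'.map_smul, TensorProduct.Algebra.smul_def, one_smul]
        rfl }
  refine ⟨g, ?_⟩
  intro x
  refine LinearMap.ext fun p => ?_
  show β' p (i x) = f x p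
  have hc : Φ (β' p) = β p := by rw [← LinearMap.comp_apply, hβ']
  have h3 : β' p (i x) = β p x := by
    calc β' p (i x) = (Φ (β' p)) x := rfl
    _ = β p x := by rw [hc]
  rw [h3]
  rfl


end
end
end
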